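/- arXiv:1609.08826 — 4 statements merged into one kernel-verified Lean document; each statement's English description precedes it below -/
import Mathlib

section
/- Let k be a positive integer and N a real number with 2 ≤ N and k ≤ N. Then there exists an integer N_k with N ≤ N_k ≤ 2N such that for every divisor d of k with d ≤ √(2N), the distance of (N_k + 1/2)/d² from the nearest integer is at least c/(d(1 + (log k)²)) for some absolute constant c > 0 independent of N, k, d. -/
open Real

private lemma abs_int_add_half (t : ℤ) : (1:ℝ)/2 ≤ |(t:ℝ) + 1/2| := by
  rcases le_or_gt 0 t with h | h
  · have h' : (0:ℝ) ≤ (t:ℝ) := by exact_mod_cast h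
    rw [le_abs]; left; linarith
  · have h'' : t ≤ -1 := by omega
    have h' : (t:ℝ) ≤ -1 := by exact_mod_cast h''
    rw [le_abs]; right; linarith

private lemma dist_half (n : ℤ) (d : ℕ) (hd : 0 < d) :
    1 / (2 * (d:ℝ)^2) ≤ |((n:ℝ) + 1/2) / (d:ℝ)^2 -
      (round (((n:ℝ) + 1/2) / (d:ℝ)^2) : ℤ)| := by
  have hd2 : (0:ℝ) < (d:ℝ)^2 := by positivity
  set x : ℝ := ((n:ℝ) + 1/2) / (d:ℝ)^2 with hx
  set m : ℤ := round x with hm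
  have h1 : x - (m:ℝ) = (((n - m * (d:ℤ)^2 : ℤ):ℝ) + 1/2) / (d:ℝ)^2 := by
    rw [hx]; push_cast; field_simp; ring
  rw [h1, abs_div, abs_of_pos hd2]
  have h2 := abs_int_add_half (n - m * (d:ℤ)^2)
  calc 1 / (2 * (d:ℝ)^2) = ((1:ℝ)/2) / (d:ℝ)^2 := by ring
    _ ≤ |((n - m * (d:ℤ)^2 : ℤ):ℝ) + 1/2| / (d:ℝ)^2 := by gcongr

private lemma card_Icc_le_real (a b : ℤ) (B : ℝ) (hB : 0 ≤ B)
    (h : ((b:ℝ) + 1 - (a:ℝ)) ≤ B) : ((Finset.Icc a b).card : ℝ) ≤ B := by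
  rw [Int.card_Icc]
  rcases le_or_gt (b + 1 - a) 0 with h0 | h0
  · rw [Int.toNat_of_nonpos h0]; simpa using hB
  · have h1 : ((b + 1 - a).toNat : ℤ) = b + 1 - a := Int.toNat_of_nonneg h0.le
    have h2 : (((b + 1 - a).toNat : ℤ) : ℝ) = (b:ℝ) + 1 - a := by rw [h1]; push_cast; ring
    push_cast at h2 ⊢
    linarith

private lemma sum_inv_divisors_le (k : ℕ) (hk : 0 < k) :
    ∑ d ∈ k.divisors, (1:ℝ)/d ≤ 1 + Real.log k := by
  have h1 : ∑ d ∈ k.divisors, (1:ℝ)/d ≤ ∑ d ∈ Finset.Icc 1 k, (1:ℝ)/d := by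
    apply Finset.sum_le_sum_of_subset_of_nonneg
    · intro d hd
      rw [Nat.mem_divisors] at hd
      refine Finset.mem_Icc.mpr ⟨?_, Nat.le_of_dvd hk hd.1⟩
      exact Nat.one_le_iff_ne_zero.mpr fun h => hk.ne' (by simpa [h, Nat.zero_dvd] using hd.1)
    · intro i _ _; positivity
  have h2 : ∑ d ∈ Finset.Icc 1 k, (1:ℝ)/d = (harmonic k : ℝ) := by
    rw [harmonic_eq_sum_Icc]
    push_cast
    simp [one_div]
  calc ∑ d ∈ k.divisors, (1:ℝ)/d ≤ (harmonic k : ℝ) := by rw [← h2]; exact h1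
    _ ≤ 1 + Real.log k := harmonic_le_one_add_log k

set_option maxHeartbeats 1000000 in
theorem stmt_0 :
    ∃ c : ℝ, 0 < c ∧
      ∀ (k : ℕ) (N : ℝ), 0 < k → 2 ≤ N → (k : ℝ) ≤ N →
        ∃ Nk : ℤ, N ≤ (Nk : ℝ) ∧ (Nk : ℝ) ≤ 2 * N ∧
          ∀ d : ℕ, d ∣ k → (d : ℝ) ≤ Real.sqrt (2 * N) →
            c / (d * (1 + (Real.log k) ^ 2)) ≤
              |((Nk : ℝ) + 1 / 2) / (d : ℝ) ^ 2 -
                round (((Nk : ℝ) + 1 / 2) / (d : ℝ) ^ 2)| := by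
  classical
  refine ⟨1/100, by norm_num, ?_⟩
  intro k N hk hN hkN
  set c : ℝ := 1/100 with hc
  set L : ℝ := (Real.log k)^2 with hLdef
  have hlog0 : 0 ≤ Real.log k := Real.log_nonneg (by exact_mod_cast hk)
  have hL0 : (0:ℝ) ≤ L := sq_nonneg _
  have hL1 : (0:ℝ) < 1 + L := by linarith
  set I : Finset ℤ := Finset.Icc ⌈N⌉ ⌊2*N⌋ with hI
  set Ds : Finset ℕ := k.divisors.filter
    (fun d => (d:ℝ) ≤ Real.sqrt (2*N) ∧ 1 + L < 2*c*d) with hDs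
  set ε : ℕ → ℝ := fun d => c / (d * (1 + L)) with hε
  set Bd : ℕ → Finset ℤ := fun d => I.filter (fun n =>
    |((n:ℝ)+1/2)/(d:ℝ)^2 - (round (((n:ℝ)+1/2)/(d:ℝ)^2) : ℤ)| < ε d) with hBd
  set Bad : Finset ℤ := Ds.biUnion Bd with hBad
  -- cardinality bound on each bad set
  have key : ∀ d ∈ Ds, ((Bd d).card : ℝ) ≤ 28 * ε d * N := by
    intro d hd
    rw [hDs, Finset.mem_filter] at hd
    have hdk := hd.1
    have hdsqrt := hd.2.1
    have hdbig := hd.2.2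
    have hd0 : 0 < d := Nat.pos_of_mem_divisors hdk
    have hdR : (1:ℝ) ≤ (d:ℝ) := by exact_mod_cast hd0
    have hd2 : (0:ℝ) < (d:ℝ)^2 := by positivity
    have hdsq : (d:ℝ)^2 ≤ 2*N := by
      have h := Real.sq_sqrt (by linarith : (0:ℝ) ≤ 2*N)
      nlinarith [Real.sqrt_nonneg (2*N)]
    have hε0 : 0 < ε d := by
      rw [hε]; positivity
    have hεval : 2 * ε d * (d:ℝ)^2 = 2*c*(d:ℝ)/(1+L) := by
      rw [hε]; field_simp
    have hεhalf : 1 < 2 * ε d * (d:ℝ)^2 := by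
      rw [hεval, lt_div_iff₀ hL1]; linarith
    set f : ℤ → ℤ := fun n => round (((n:ℝ)+1/2)/(d:ℝ)^2) with hf
    set m₁ : ℤ := ⌈N/(d:ℝ)^2 - 1/2⌉ with hm₁
    set m₂ : ℤ := ⌊(2*N+1/2)/(d:ℝ)^2 + 1/2⌋ with hm₂
    set E : ℕ := ⌊2 * ε d * (d:ℝ)^2⌋₊ + 1 with hE
    have maps : ∀ n ∈ Bd d, f n ∈ Finset.Icc m₁ m₂ := by
      intro n hn
      rw [hBd, Finset.mem_filter] at hn
      have hnI := hn.1
      rw [hI, Finset.mem_Icc] at hnI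
      have hnlo : N ≤ (n:ℝ) := le_trans (Int.le_ceil N) (by exact_mod_cast hnI.1)
      have hnhi : (n:ℝ) ≤ 2*N := le_trans (by exact_mod_cast hnI.2) (Int.floor_le (2*N))
      set x : ℝ := ((n:ℝ)+1/2)/(d:ℝ)^2 with hx
      have hxlo : N/(d:ℝ)^2 ≤ x := by
        rw [hx]; exact (div_le_div_iff_of_pos_right hd2).mpr (by linarith)
      have hxhi : x ≤ (2*N+1/2)/(d:ℝ)^2 := by
        rw [hx]; exact (div_le_div_iff_of_pos_right hd2).mpr (by linarith)
      have hr := abs_sub_round x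
      rw [abs_le] at hr
      have hfn : f n = round x := rfl
      rw [Finset.mem_Icc]
      constructor
      · rw [hm₁, Int.ceil_le, hfn]; linarith
      · rw [hm₂, Int.le_floor, hfn]; linarith
    have fibers : ∀ m ∈ Finset.Icc m₁ m₂,
        ((Bd d).filter (fun n => f n = m)).card ≤ E := by
      intro m _
      set a : ℤ := ⌈(m:ℝ)*(d:ℝ)^2 - ε d*(d:ℝ)^2 - 1/2⌉ with ha
      set b : ℤ := ⌊(m:ℝ)*(d:ℝ)^2 + ε d*(d:ℝ)^2 - 1/2⌋ with hb
      have hsub : (Bd d).filter (fun n => f n = m) ⊆ Finset.Icc a b := by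
        intro n hn
        rw [Finset.mem_filter] at hn
        obtain ⟨hn1, hn2⟩ := hn
        rw [hBd, Finset.mem_filter] at hn1
        have hdist := hn1.2
        set x : ℝ := ((n:ℝ)+1/2)/(d:ℝ)^2 with hx
        have hrx : (round x : ℤ) = m := hn2
        have habs : |x - (m:ℝ)| < ε d := by
          rw [← hrx]; exact_mod_cast hdist
        rw [abs_sub_lt_iff] at habs
        have hx1 : (m:ℝ) - ε d < x := by linarith [habs.2]
        have hx2 : x < (m:ℝ) + ε d := by linarith [habs.1]
        rw [hx] at hx1 hx2
        have hx1' : ((m:ℝ) - ε d) * (d:ℝ)^2 < (n:ℝ) + 1/2 :=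
          (lt_div_iff₀ hd2).mp hx1
        have hx2' : (n:ℝ) + 1/2 < ((m:ℝ) + ε d) * (d:ℝ)^2 :=
          (div_lt_iff₀ hd2).mp hx2
        have hn1' : (m:ℝ)*(d:ℝ)^2 - ε d*(d:ℝ)^2 - 1/2 < (n:ℝ) := by nlinarith [hx1']
        have hn2' : (n:ℝ) < (m:ℝ)*(d:ℝ)^2 + ε d*(d:ℝ)^2 - 1/2 := by nlinarith [hx2']
        rw [Finset.mem_Icc]
        constructor
        · rw [ha, Int.ceil_le]; linarith
        · rw [hb, Int.le_floor]; linarith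
      calc ((Bd d).filter (fun n => f n = m)).card ≤ (Finset.Icc a b).card :=
            Finset.card_le_card hsub
        _ ≤ E := by
            rw [Int.card_Icc, hE]
            rw [Int.toNat_le]
            push_cast
            have h1 : (b : ℝ) ≤ (m:ℝ)*(d:ℝ)^2 + ε d*(d:ℝ)^2 - 1/2 := Int.floor_le _
            have h2 : (m:ℝ)*(d:ℝ)^2 - ε d*(d:ℝ)^2 - 1/2 ≤ (a:ℝ) := Int.le_ceil _
            have h3 : b - a ≤ (⌊2 * ε d * (d:ℝ)^2⌋₊ : ℤ) := by
              have : ((b - a : ℤ) : ℝ) ≤ 2 * ε d * (d:ℝ)^2 := by push_cast; linarith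
              have h4 : (b - a : ℤ) ≤ ⌊2 * ε d * (d:ℝ)^2⌋ := Int.le_floor.mpr this
              have h5 : (⌊2 * ε d * (d:ℝ)^2⌋₊ : ℤ) = ⌊2 * ε d * (d:ℝ)^2⌋ :=
                Int.natCast_floor_eq_floor (by positivity)
              omega
            omega
    have hcard : (Bd d).card ≤ E * (Finset.Icc m₁ m₂).card :=
      Finset.card_le_mul_card_image_of_maps_to maps E fibers
    have hEb : (E:ℝ) ≤ 4 * ε d * (d:ℝ)^2 := by
      rw [hE]
      push_cast
      have := Nat.floor_le (show (0:ℝ) ≤ 2 * ε d * (d:ℝ)^2 by positivity)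
      linarith
    have hIb : ((Finset.Icc m₁ m₂).card : ℝ) ≤ N/(d:ℝ)^2 + 3 := by
      apply card_Icc_le_real
      · positivity
      · have h1 : (m₂ : ℝ) ≤ (2*N+1/2)/(d:ℝ)^2 + 1/2 := Int.floor_le _
        have h2 : N/(d:ℝ)^2 - 1/2 ≤ (m₁:ℝ) := Int.le_ceil _
        have h3 : (2*N+1/2)/(d:ℝ)^2 = 2*N/(d:ℝ)^2 + (1/2)/(d:ℝ)^2 := by ring
        have h4 : (1/2)/(d:ℝ)^2 ≤ 1/2 := by
          rw [div_le_iff₀ hd2]; nlinarith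
        have h5 : 2*N/(d:ℝ)^2 = 2 * (N/(d:ℝ)^2) := by ring
        linarith
    have hmain : ((Bd d).card : ℝ) ≤ (4 * ε d * (d:ℝ)^2) * (N/(d:ℝ)^2 + 3) := by
      calc ((Bd d).card : ℝ) ≤ (E:ℝ) * ((Finset.Icc m₁ m₂).card : ℝ) := by
            exact_mod_cast hcard
        _ ≤ (4 * ε d * (d:ℝ)^2) * (N/(d:ℝ)^2 + 3) := by
            apply mul_le_mul hEb hIb (by positivity) (by positivity)
    have hexp : (4 * ε d * (d:ℝ)^2) * (N/(d:ℝ)^2 + 3) = 4*ε d*N + 12*ε d*(d:ℝ)^2 := by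
      field_simp
      ring
    rw [hexp] at hmain
    nlinarith [hε0, hdsq, hmain]
  -- total bad cardinality
  have hsubBad : Bad ⊆ I := by
    rw [hBad]
    apply Finset.biUnion_subset.mpr
    intro d _
    rw [hBd]
    exact Finset.filter_subset _ _
  have hBadR : (Bad.card : ℝ) ≤ 35 * c * N := by
    have h1 : Bad.card ≤ ∑ d ∈ Ds, (Bd d).card := Finset.card_biUnion_le
    have h2 : (Bad.card : ℝ) ≤ ∑ d ∈ Ds, ((Bd d).card : ℝ) := by exact_mod_cast h1
    have h3 : ∑ d ∈ Ds, ((Bd d).card : ℝ) ≤ ∑ d ∈ Ds, 28 * ε d * N :=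
      Finset.sum_le_sum key
    have h4 : ∑ d ∈ Ds, 28 * ε d * N = (28*c*N/(1+L)) * ∑ d ∈ Ds, (1:ℝ)/d := by
      rw [Finset.mul_sum]
      apply Finset.sum_congr rfl
      intro d hd
      have hd0 : 0 < d := Nat.pos_of_mem_divisors (Finset.mem_of_mem_filter d hd)
      have hdR : (0:ℝ) < (d:ℝ) := by exact_mod_cast hd0
      rw [hε]
      field_simp
    have h5 : ∑ d ∈ Ds, (1:ℝ)/d ≤ ∑ d ∈ k.divisors, (1:ℝ)/d := by
      apply Finset.sum_le_sum_of_subset_of_nonneg (Finset.filter_subset _ _)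
      intro i _ _; positivity
    have h6 := sum_inv_divisors_le k hk
    have h7 : (0:ℝ) ≤ 28*c*N/(1+L) := by positivity
    have h8 : (Bad.card : ℝ) ≤ (28*c*N/(1+L)) * (1 + Real.log k) := by
      calc (Bad.card : ℝ) ≤ ∑ d ∈ Ds, 28 * ε d * N := le_trans h2 h3
        _ = (28*c*N/(1+L)) * ∑ d ∈ Ds, (1:ℝ)/d := h4
        _ ≤ (28*c*N/(1+L)) * (1 + Real.log k) := by
            apply mul_le_mul_of_nonneg_left (le_trans h5 h6) h7
    have h9 : (28*c*N/(1+L)) * (1 + Real.log k) ≤ 35 * c * N := by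
      rw [div_mul_eq_mul_div, div_le_iff₀ hL1]
      have hx := sq_nonneg (Real.log k - 2/5)
      have hc0 : (0:ℝ) < c := by rw [hc]; norm_num
      have hN0 : (0:ℝ) < N := by linarith
      rw [hLdef]
      nlinarith [mul_pos hc0 hN0]
    exact h8.trans h9
  have hIcard : (N - 1 : ℝ) ≤ (I.card : ℝ) := by
    rw [hI, Int.card_Icc]
    have h1 : (⌈N⌉ : ℝ) < N + 1 := Int.ceil_lt_add_one N
    have h2 : 2*N - 1 < (⌊2*N⌋ : ℝ) := Int.sub_one_lt_floor (2*N)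
    have h3 : (0:ℤ) ≤ ⌊2*N⌋ + 1 - ⌈N⌉ := by
      have : (0:ℝ) ≤ (⌊2*N⌋:ℝ) + 1 - (⌈N⌉:ℝ) := by linarith
      exact_mod_cast this
    have h4 : (((⌊2*N⌋ + 1 - ⌈N⌉).toNat : ℕ) : ℝ) = ((⌊2*N⌋ + 1 - ⌈N⌉ : ℤ) : ℝ) := by
      rw [← Int.cast_natCast, Int.toNat_of_nonneg h3]
    rw [h4]
    push_cast
    linarith
  have hlt : Bad.card < I.card := by
    have : (Bad.card : ℝ) < (I.card : ℝ) := by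
      have hc0 : 35 * c * N = 0.35 * N := by rw [hc]; ring
      rw [hc0] at hBadR
      linarith
    exact_mod_cast this
  have hne : (I \ Bad).Nonempty := by
    rw [← Finset.card_pos, Finset.card_sdiff_of_subset hsubBad]
    omega
  obtain ⟨n, hn⟩ := hne
  rw [Finset.mem_sdiff] at hn
  obtain ⟨hnI, hnBad⟩ := hn
  rw [hI, Finset.mem_Icc] at hnI
  refine ⟨n, ?_, ?_, ?_⟩
  · exact le_trans (Int.le_ceil N) (by exact_mod_cast hnI.1)
  · exact le_trans (by exact_mod_cast hnI.2) (Int.floor_le (2*N))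
  · intro d hdvd hdsqrt
    have hd0 : 0 < d := by
      rcases Nat.eq_zero_or_pos d with h | h
      · exfalso; rw [h] at hdvd; exact hk.ne' (Nat.eq_zero_of_zero_dvd hdvd)
      · exact h
    have hdR : (1:ℝ) ≤ (d:ℝ) := by exact_mod_cast hd0
    rcases le_or_gt (2*c*(d:ℝ)) (1 + L) with hsmall | hbig
    · -- trivial bound
      have h1 := dist_half n d hd0
      have h2 : c / ((d:ℝ) * (1 + L)) ≤ 1 / (2 * (d:ℝ)^2) := by
        rw [div_le_div_iff₀ (by positivity) (by positivity)]
        nlinarith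
      exact le_trans h2 (by exact_mod_cast h1)
    · -- counting case
      have hdDs : d ∈ Ds := by
        rw [hDs, Finset.mem_filter]
        exact ⟨Nat.mem_divisors.mpr ⟨hdvd, hk.ne'⟩, hdsqrt, hbig⟩
      by_contra hcon
      push_neg at hcon
      apply hnBad
      rw [hBad]
      apply Finset.mem_biUnion.mpr
      refine ⟨d, hdDs, ?_⟩
      rw [hBd, Finset.mem_filter]
      refine ⟨by rw [hI, Finset.mem_Icc]; exact hnI, ?_⟩
      rw [hε]
      exact_mod_cast hcon
end

section
/- Let [a,b] be a real interval and f, g : [a,b] → ℝ with f continuously differentiable on [a,b] and g/f' monotonic. Suppose M > 0 is such that f'(x)/g(x) ≥ M for all x in [a,b] (or f'(x)/g(x) ≤ -M for all x in [a,b]). Then |∫_a^b g(x) e(f(x)) dx| ≤ 2/(π M). -/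
open Real Complex MeasureTheory Set

lemma osc (a b c d : ℝ) (f f' : ℝ → ℝ) (hf' : ContinuousOn f' (Set.Icc a b))
    (hderiv : ∀ x ∈ Set.Icc a b, HasDerivAt f (f' x) x)
    (hc : c ∈ Set.Icc a b) (hd : d ∈ Set.Icc a b) :
    ‖∫ x in c..d, (f' x : ℂ) * Complex.exp (2 * Real.pi * Complex.I * f x)‖ ≤ 1 / Real.pi := by
  have hsub : Set.uIcc c d ⊆ Set.Icc a b := Set.uIcc_subset_Icc hc hd
  have hfc : ContinuousOn f (Set.Icc a b) := fun x hx =>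
    (hderiv x hx).continuousAt.continuousWithinAt
  have hF : ContinuousOn (fun x => (f' x : ℂ) * Complex.exp (2 * Real.pi * Complex.I * f x))
      (Set.Icc a b) := by
    apply ContinuousOn.mul
    · exact Complex.continuous_ofReal.comp_continuousOn hf'
    · exact Complex.continuous_exp.comp_continuousOn
        (ContinuousOn.mul continuousOn_const (Complex.continuous_ofReal.comp_continuousOn hfc))
  have hne : (2 * Real.pi * Complex.I : ℂ) ≠ 0 := by
    simp [Real.pi_ne_zero, Complex.I_ne_zero]
  have hE : ∀ x ∈ Set.uIcc c d, HasDerivAt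
      (fun y => Complex.exp (2 * Real.pi * Complex.I * f y) / (2 * Real.pi * Complex.I))
      ((f' x : ℂ) * Complex.exp (2 * Real.pi * Complex.I * f x)) x := by
    intro x hx
    have h1 : HasDerivAt (fun y => (f y : ℂ)) (f' x) x :=
      (hderiv x (hsub hx)).ofReal_comp
    have h2 := h1.const_mul (2 * Real.pi * Complex.I : ℂ)
    have h3 := h2.cexp
    have h4 := h3.div_const (2 * Real.pi * Complex.I : ℂ)
    convert h4 using 1
    · rfl
    rw [eq_div_iff hne]
    ring
  have hInt : IntervalIntegrable
      (fun x => (f' x : ℂ) * Complex.exp (2 * Real.pi * Complex.I * f x)) volume c d :=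
    (hF.mono hsub).intervalIntegrable
  rw [intervalIntegral.integral_eq_sub_of_hasDerivAt hE hInt]
  have hnorm : ∀ y : ℝ, ‖Complex.exp (2 * Real.pi * Complex.I * f y) /
      (2 * Real.pi * Complex.I)‖ = 1 / (2 * Real.pi) := by
    intro y
    have : (2 * Real.pi * Complex.I * f y : ℂ) = ((2 * Real.pi * f y : ℝ) : ℂ) * Complex.I := by
      push_cast; ring
    rw [norm_div, this, Complex.norm_exp_ofReal_mul_I]
    simp [Real.pi_nonneg, _root_.abs_of_nonneg Real.pi_nonneg]
  calc ‖_ - _‖ ≤ ‖Complex.exp (2 * Real.pi * Complex.I * f d) / (2 * Real.pi * Complex.I)‖ +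
        ‖Complex.exp (2 * Real.pi * Complex.I * f c) / (2 * Real.pi * Complex.I)‖ :=
        norm_sub_le _ _
    _ ≤ 1 / Real.pi := by
        rw [hnorm, hnorm]
        rw [← add_div]
        rw [div_le_div_iff₀ (by positivity) Real.pi_pos]
        ring_nf
        nlinarith [Real.pi_pos]

lemma key (a b M : ℝ) (f f' g : ℝ → ℝ) (hab : a ≤ b) (hM : 0 < M)
    (hf' : ContinuousOn f' (Set.Icc a b))
    (hderiv : ∀ x ∈ Set.Icc a b, HasDerivAt f (f' x) x)
    (hmono : MonotoneOn (fun x => g x / f' x) (Set.Icc a b) ∨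
      AntitoneOn (fun x => g x / f' x) (Set.Icc a b))
    (hlow : ∀ x ∈ Set.Icc a b, M ≤ f' x / g x) :
    ‖∫ x in a..b, (g x : ℂ) * Complex.exp (2 * Real.pi * Complex.I * f x)‖ ≤
      2 / (Real.pi * M) := by
  set φ : ℝ → ℝ := fun x => g x / f' x with hφdef
  set F : ℝ → ℂ := fun x => (f' x : ℂ) * Complex.exp (2 * Real.pi * Complex.I * f x) with hFdef
  set proj : ℝ → ℝ := fun x => a ⊔ (x ⊓ b) with hprojdef
  have hproj_mem : ∀ x, proj x ∈ Set.Icc a b := by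
    intro x
    constructor
    · exact le_max_left _ _
    · exact max_le hab (min_le_right _ _)
  have hproj_id : ∀ x ∈ Set.Icc a b, proj x = x := by
    intro x hx
    simp only [hprojdef]
    rw [min_eq_left hx.2, max_eq_right hx.1]
  have hproj_mono : Monotone proj := fun x y hxy =>
    max_le_max le_rfl (min_le_min_right b hxy)
  have hπ : (0:ℝ) < Real.pi := Real.pi_pos
  -- basic facts about φ on Icc
  have hfacts : ∀ x ∈ Set.Icc a b, 0 < φ x ∧ φ x ≤ 1/M ∧ g x = φ x * f' x := by
    intro x hx
    have hMle := hlow x hx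
    have hgne : g x ≠ 0 := by
      intro h
      rw [h, div_zero] at hMle
      linarith
    have hdivpos : 0 < f' x / g x := lt_of_lt_of_le hM hMle
    have hf'ne : f' x ≠ 0 := by
      intro h
      rw [h, zero_div] at hdivpos
      exact lt_irrefl _ hdivpos
    have hφeq : φ x = (f' x / g x)⁻¹ := by
      simp only [hφdef]
      rw [inv_div]
    refine ⟨?_, ?_, ?_⟩
    · rw [hφeq]; exact inv_pos.2 hdivpos
    · rw [hφeq, one_div]
      exact inv_anti₀ hM hMle
    · simp only [hφdef]
      rw [div_mul_cancel₀ _ hf'ne]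
  -- continuity of F on Icc
  have hfc : ContinuousOn f (Set.Icc a b) := fun x hx =>
    (hderiv x hx).continuousAt.continuousWithinAt
  have hF : ContinuousOn F (Set.Icc a b) := by
    apply ContinuousOn.mul
    · exact Complex.continuous_ofReal.comp_continuousOn hf'
    · exact Complex.continuous_exp.comp_continuousOn
        (ContinuousOn.mul continuousOn_const (Complex.continuous_ofReal.comp_continuousOn hfc))
  have hproj_cont : Continuous proj := by
    apply Continuous.max continuous_const
    exact Continuous.min continuous_id continuous_const
  have hFh_cont : Continuous (F ∘ proj) :=
    hF.comp_continuous hproj_cont hproj_mem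
  -- measurability of φ ∘ proj
  have hφh_meas : Measurable (φ ∘ proj) := by
    rcases hmono with h | h
    · exact Monotone.measurable (fun x y hxy => h (hproj_mem x) (hproj_mem y) (hproj_mono hxy))
    · exact Antitone.measurable (fun x y hxy => h (hproj_mem x) (hproj_mem y) (hproj_mono hxy))
  -- bound on F
  obtain ⟨C, hC⟩ := isCompact_Icc.exists_bound_of_continuousOn hF
  have hC0 : 0 ≤ C := le_trans (norm_nonneg _) (hC a ⟨le_rfl, hab⟩)
  set G : ℝ → ℝ → ℂ := fun x t => if t < (φ ∘ proj) x then (F ∘ proj) x else 0 with hGdef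
  -- step 1: rewrite as set integral and layer cake
  rw [intervalIntegral.integral_of_le hab]
  have hstep2 : ∫ x in Set.Ioc a b, (g x : ℂ) * Complex.exp (2 * Real.pi * Complex.I * f x)
      = ∫ x in Set.Ioc a b, ∫ t in Set.Ioc 0 (1/M), G x t := by
    apply setIntegral_congr_fun measurableSet_Ioc
    intro x hx
    have hx' : x ∈ Set.Icc a b := Set.Ioc_subset_Icc_self hx
    obtain ⟨hφpos, hφle, hgeq⟩ := hfacts x hx'
    have hpx : proj x = x := hproj_id x hx'
    have h1 : ∀ t : ℝ, G x t = (Set.Iio (φ x)).indicator (fun _ => F x) t := by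
      intro t
      simp only [hGdef, Function.comp, hpx, Set.indicator_apply, Set.mem_Iio]
    simp only [h1]
    rw [setIntegral_indicator measurableSet_Iio]
    have h2 : Set.Ioc 0 (1/M) ∩ Set.Iio (φ x) = Set.Ioo 0 (φ x) := by
      ext t
      simp only [Set.mem_inter_iff, Set.mem_Ioc, Set.mem_Iio, Set.mem_Ioo]
      constructor
      · rintro ⟨⟨h3, _⟩, h4⟩; exact ⟨h3, h4⟩
      · rintro ⟨h3, h4⟩; exact ⟨⟨h3, le_trans h4.le hφle⟩, h4⟩
    rw [h2, setIntegral_const, Real.volume_real_Ioo, sub_zero, max_eq_left hφpos.le]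
    rw [hgeq]
    simp only [hFdef]
    push_cast
    rw [Complex.real_smul]
    push_cast
    ring
  rw [hstep2]
  -- finiteness instances
  haveI : IsFiniteMeasure (volume.restrict (Set.Ioc a b)) := by
    constructor
    rw [Measure.restrict_apply_univ, Real.volume_Ioc]
    exact ENNReal.ofReal_lt_top
  haveI : IsFiniteMeasure (volume.restrict (Set.Ioc (0:ℝ) (1/M))) := by
    constructor
    rw [Measure.restrict_apply_univ, Real.volume_Ioc]
    exact ENNReal.ofReal_lt_top
  -- integrability for Fubini
  have hGm : AEStronglyMeasurable (fun p : ℝ × ℝ => G p.1 p.2)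
      ((volume.restrict (Set.Ioc a b)).prod (volume.restrict (Set.Ioc 0 (1/M)))) := by
    have heq : (fun p : ℝ × ℝ => G p.1 p.2) =
        Set.indicator {p : ℝ × ℝ | p.2 < (φ ∘ proj) p.1} (fun p => (F ∘ proj) p.1) := by
      funext p
      simp only [hGdef, Set.indicator_apply, Set.mem_setOf_eq]
    rw [heq]
    exact ((hFh_cont.comp continuous_fst).stronglyMeasurable.indicator
      (measurableSet_lt measurable_snd (hφh_meas.comp measurable_fst))).aestronglyMeasurable
  have hGint : Integrable (fun p : ℝ × ℝ => G p.1 p.2)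
      ((volume.restrict (Set.Ioc a b)).prod (volume.restrict (Set.Ioc 0 (1/M)))) := by
    apply Integrable.mono' (integrable_const C) hGm
    filter_upwards with p
    simp only [hGdef]
    split
    · exact hC _ (hproj_mem _)
    · simpa using hC0
  rw [MeasureTheory.integral_integral_swap hGint]
  -- final bound
  have hinner : ∀ t ∈ Set.Ioc (0:ℝ) (1/M), ‖∫ x in Set.Ioc a b, G x t‖ ≤ 1 / Real.pi := by
    intro t ht
    have h1 : ∀ x, G x t = Set.indicator ((φ ∘ proj) ⁻¹' Set.Ioi t) (F ∘ proj) x := by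
      intro x
      classical
      rw [Set.indicator_apply]
      simp only [hGdef, Set.mem_preimage, Set.mem_Ioi]
    simp only [h1]
    rw [setIntegral_indicator (hφh_meas measurableSet_Ioi)]
    set S := Set.Ioc a b ∩ (φ ∘ proj) ⁻¹' Set.Ioi t with hSdef
    by_cases hS : S.Nonempty
    · obtain ⟨s₀, hs₀⟩ := hS
      have hFcongr : ∀ c d : ℝ, c ∈ Set.Icc a b → d ∈ Set.Icc a b →
          ‖∫ x in c..d, (F ∘ proj) x‖ ≤ 1 / Real.pi := by
        intro c d hcm hdm
        have heq : ∫ x in c..d, (F ∘ proj) x = ∫ x in c..d, F x := by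
          apply intervalIntegral.integral_congr
          intro x hx
          have hxm : x ∈ Set.Icc a b := Set.uIcc_subset_Icc hcm hdm hx
          simp only [Function.comp_apply, hproj_id x hxm]
        rw [heq]
        exact osc a b c d f f' hf' hderiv hcm hdm
      rcases hmono with hm | hm
      · have hmono' : Monotone (φ ∘ proj) := fun x y hxy =>
          hm (hproj_mem x) (hproj_mem y) (hproj_mono hxy)
        set c := sInf S with hcdef
        have hbdd : BddBelow S := ⟨a, fun s hs => hs.1.1.le⟩
        have hca : a ≤ c := le_csInf ⟨s₀, hs₀⟩ fun s hs => hs.1.1.le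
        have hcb : c ≤ b := le_trans (csInf_le hbdd hs₀) hs₀.1.2
        have hsub1 : Set.Ioc c b ⊆ S := by
          intro y hy
          obtain ⟨s, hsS, hsy⟩ := (csInf_lt_iff hbdd ⟨s₀, hs₀⟩).1 hy.1
          exact ⟨⟨lt_trans hsS.1.1 hsy, hy.2⟩,
            lt_of_lt_of_le (Set.mem_Ioi.1 hsS.2) (hmono' hsy.le)⟩
        have hsub2 : S ⊆ Set.Icc c b := fun s hs => ⟨csInf_le hbdd hs, hs.1.2⟩
        have hae : S =ᵐ[volume] Set.Ioc c b := by
          rw [MeasureTheory.ae_eq_set]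
          constructor
          · refine measure_mono_null ?_ (measure_singleton c)
            intro x hx
            have hx1 := hsub2 hx.1
            have hx2 : ¬(c < x ∧ x ≤ b) := by simpa [Set.mem_Ioc] using hx.2
            have hxc : x ≤ c := by
              by_contra h
              exact hx2 ⟨lt_of_not_ge h, hx1.2⟩
            simp [le_antisymm hxc hx1.1]
          · rw [Set.diff_eq_empty.2 hsub1, measure_empty]
        rw [setIntegral_congr_set hae, ← intervalIntegral.integral_of_le hcb]
        exact hFcongr c b ⟨hca, hcb⟩ ⟨hab, le_rfl⟩
      · have hmono' : Antitone (φ ∘ proj) := fun x y hxy =>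
          hm (hproj_mem x) (hproj_mem y) (hproj_mono hxy)
        set c := sSup S with hcdef
        have hbdd : BddAbove S := ⟨b, fun s hs => hs.1.2⟩
        have hcb : c ≤ b := csSup_le ⟨s₀, hs₀⟩ fun s hs => hs.1.2
        have hca : a ≤ c := le_trans hs₀.1.1.le (le_csSup hbdd hs₀)
        have hsub1 : Set.Ioo a c ⊆ S := by
          intro y hy
          obtain ⟨s, hsS, hys⟩ := (lt_csSup_iff hbdd ⟨s₀, hs₀⟩).1 hy.2
          exact ⟨⟨hy.1, le_trans hys.le hsS.1.2⟩,
            lt_of_lt_of_le (Set.mem_Ioi.1 hsS.2) (hmono' hys.le)⟩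
        have hsub2 : S ⊆ Set.Ioc a c := fun s hs => ⟨hs.1.1, le_csSup hbdd hs⟩
        have hae : S =ᵐ[volume] Set.Ioc a c := by
          rw [MeasureTheory.ae_eq_set]
          constructor
          · rw [Set.diff_eq_empty.2 hsub2, measure_empty]
          · refine measure_mono_null ?_ (measure_singleton c)
            intro x hx
            have hx1 : x ∈ Set.Ioc a c := hx.1
            by_cases hxc : x < c
            · exact absurd (hsub1 ⟨hx1.1, hxc⟩) hx.2
            · simp [le_antisymm hx1.2 (not_lt.1 hxc)]
        rw [setIntegral_congr_set hae, ← intervalIntegral.integral_of_le hca]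
        exact hFcongr a c ⟨le_rfl, hab⟩ ⟨hca, hcb⟩
    · rw [Set.not_nonempty_iff_eq_empty] at hS
      rw [hS]
      simp only [Measure.restrict_empty, integral_zero_measure, norm_zero]
      positivity
  calc ‖∫ t in Set.Ioc (0:ℝ) (1/M), ∫ x in Set.Ioc a b, G x t‖
      ≤ (1 / Real.pi) * (volume (Set.Ioc (0:ℝ) (1/M))).toReal := by
        apply norm_setIntegral_le_of_norm_le_const
        · rw [Real.volume_Ioc]; exact ENNReal.ofReal_lt_top
        · exact hinner
    _ ≤ 2 / (Real.pi * M) := by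
        rw [Real.volume_Ioc, sub_zero, ENNReal.toReal_ofReal (by positivity)]
        have h : 1 / Real.pi * (1 / M) = 1 / (Real.pi * M) := by ring
        rw [h, div_le_div_iff₀ (by positivity) (by positivity)]
        nlinarith [Real.pi_pos, hM]


/-- First derivative test for oscillatory integrals. -/
theorem stmt_2 (a b M : ℝ) (f f' g : ℝ → ℝ) (hab : a ≤ b) (hM : 0 < M)
    (hf' : ContinuousOn f' (Set.Icc a b))
    (hderiv : ∀ x ∈ Set.Icc a b, HasDerivAt f (f' x) x)
    (hmono : MonotoneOn (fun x => g x / f' x) (Set.Icc a b) ∨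
      AntitoneOn (fun x => g x / f' x) (Set.Icc a b))
    (hlow : (∀ x ∈ Set.Icc a b, M ≤ f' x / g x) ∨
      (∀ x ∈ Set.Icc a b, f' x / g x ≤ -M)) :
    ‖∫ x in a..b, (g x : ℂ) * Complex.exp (2 * Real.pi * Complex.I * f x)‖ ≤
      2 / (Real.pi * M) := by
  rcases hlow with h | h
  · exact key a b M f f' g hab hM hf' hderiv hmono h
  · have h2 : ∀ x ∈ Set.Icc a b, M ≤ f' x / (-g) x := by
      intro x hx
      have := h x hx
      simp only [Pi.neg_apply]
      rw [div_neg]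
      linarith
    have hmono2 : MonotoneOn (fun x => (-g) x / f' x) (Set.Icc a b) ∨
        AntitoneOn (fun x => (-g) x / f' x) (Set.Icc a b) := by
      rcases hmono with hm | hm
      · right
        intro x hx y hy hxy
        simp only [Pi.neg_apply, neg_div]
        exact neg_le_neg (hm hx hy hxy)
      · left
        intro x hx y hy hxy
        simp only [Pi.neg_apply, neg_div]
        exact neg_le_neg (hm hx hy hxy)
    have hk := key a b M f f' (-g) hab hM hf' hderiv hmono2 h2
    have heq : (∫ x in a..b, ((-g) x : ℂ) * Complex.exp (2 * Real.pi * Complex.I * f x))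
        = -∫ x in a..b, (g x : ℂ) * Complex.exp (2 * Real.pi * Complex.I * f x) := by
      rw [← intervalIntegral.integral_neg]
      simp only [Pi.neg_apply, Complex.ofReal_neg, neg_mul]
    rw [heq, norm_neg] at hk
    exact hk
end

section
/- Let k, d₁, d₂, m₁, m₂ be positive integers with d₁² m₁ ≠ d₂² m₂, and let X ≥ 2. Then |∫_X^{2X} x^{2/3} cos(6π d₁^{2/3} m₁^{1/3} x^{1/3}/k) cos(6π d₂^{2/3} m₂^{1/3} x^{1/3}/k) dx| ≪ k X^{4/3} / |d₁^{2/3} m₁^{1/3} - d₂^{2/3} m₂^{1/3}|, with an absolute implied constant. -/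
open Real

lemma cont13 : Continuous fun x : ℝ => x ^ ((1:ℝ)/3) :=
  continuous_id.rpow_const fun _ => Or.inr (by norm_num)

lemma cont23 : Continuous fun x : ℝ => x ^ ((2:ℝ)/3) :=
  continuous_id.rpow_const fun _ => Or.inr (by norm_num)

lemma contOsc (c : ℝ) : Continuous fun x : ℝ => x ^ ((2:ℝ)/3) * Real.cos (c * x ^ ((1:ℝ)/3)) :=
  cont23.mul (Real.continuous_cos.comp (continuous_const.mul cont13))

lemma key_osc (c X : ℝ) (hc : c ≠ 0) (hX : 2 ≤ X) :
    |∫ x in X..(2*X), x ^ ((2:ℝ)/3) * Real.cos (c * x ^ ((1:ℝ)/3))| ≤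
      32 * X ^ ((4:ℝ)/3) / |c| := by
  have hX0 : (0:ℝ) < X := by linarith
  have hcpos : 0 < |c| := abs_pos.mpr hc
  set f : ℝ → ℝ := fun x => x ^ ((2:ℝ)/3) * Real.cos (c * x ^ ((1:ℝ)/3)) with hf
  set g : ℝ → ℝ := fun x => 4 / c * x ^ ((1:ℝ)/3) * Real.sin (c * x ^ ((1:ℝ)/3)) with hg
  set H : ℝ → ℝ := fun x => 3 / c * x ^ ((4:ℝ)/3) * Real.sin (c * x ^ ((1:ℝ)/3)) with hH
  have hcf : Continuous f := contOsc c
  have hcg : Continuous g :=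
    ((continuous_const.mul cont13)).mul (Real.continuous_sin.comp (continuous_const.mul cont13))
  have hderiv : ∀ x ∈ Set.uIcc X (2*X), HasDerivAt H (f x + g x) x := by
    intro x hx
    rw [Set.uIcc_of_le (by linarith)] at hx
    have hx0 : 0 < x := lt_of_lt_of_le hX0 hx.1
    have h43 : HasDerivAt (fun x : ℝ => x ^ ((4:ℝ)/3)) ((4:ℝ)/3 * x ^ ((1:ℝ)/3)) x := by
      have := Real.hasDerivAt_rpow_const (p := (4:ℝ)/3) (Or.inl hx0.ne')
      norm_num at this
      exact this
    have hin : HasDerivAt (fun x : ℝ => c * x ^ ((1:ℝ)/3)) (c * ((1:ℝ)/3 * x ^ ((1:ℝ)/3 - 1))) x :=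
      (Real.hasDerivAt_rpow_const (p := (1:ℝ)/3) (Or.inl hx0.ne')).const_mul c
    have hsin : HasDerivAt (fun x : ℝ => Real.sin (c * x ^ ((1:ℝ)/3)))
        (Real.cos (c * x ^ ((1:ℝ)/3)) * (c * ((1:ℝ)/3 * x ^ ((1:ℝ)/3 - 1)))) x :=
      (Real.hasDerivAt_sin _).comp x hin
    have hmul := ((h43.const_mul ((3:ℝ)/c)).mul hsin)
    have key : 3 / c * ((4:ℝ)/3 * x ^ ((1:ℝ)/3)) * Real.sin (c * x ^ ((1:ℝ)/3)) +
        3 / c * x ^ ((4:ℝ)/3) * (Real.cos (c * x ^ ((1:ℝ)/3)) * (c * ((1:ℝ)/3 * x ^ ((1:ℝ)/3 - 1))))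
        = f x + g x := by
      have hxx : x ^ ((4:ℝ)/3) * x ^ ((1:ℝ)/3 - 1) = x ^ ((2:ℝ)/3) := by
        rw [← Real.rpow_add hx0]; norm_num
      have h2 : 3 / c * x ^ ((4:ℝ)/3) *
          (Real.cos (c * x ^ ((1:ℝ)/3)) * (c * ((1:ℝ)/3 * x ^ ((1:ℝ)/3 - 1)))) =
          c / c * (x ^ ((4:ℝ)/3) * x ^ ((1:ℝ)/3 - 1)) * Real.cos (c * x ^ ((1:ℝ)/3)) := by
        ring
      rw [h2, div_self hc, hxx]
      simp only [hf, hg]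
      ring
    rw [← key]
    exact hmul
  have hint : IntervalIntegrable (fun x => f x + g x) MeasureTheory.volume X (2*X) :=
    (hcf.add hcg).intervalIntegrable _ _
  have ftc : ∫ x in X..(2*X), (f x + g x) = H (2*X) - H X :=
    intervalIntegral.integral_eq_sub_of_hasDerivAt hderiv hint
  have hsplit : (∫ x in X..(2*X), f x) = H (2*X) - H X - ∫ x in X..(2*X), g x := by
    rw [← ftc, intervalIntegral.integral_add (hcf.intervalIntegrable _ _) (hcg.intervalIntegrable _ _)]
    ring
  have h24 : (2:ℝ) ^ ((4:ℝ)/3) ≤ 4 := by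
    have h1 : (2:ℝ) ^ ((4:ℝ)/3) ≤ (2:ℝ) ^ (2:ℝ) :=
      Real.rpow_le_rpow_of_exponent_le one_le_two (by norm_num)
    have h2 := Real.rpow_natCast (2:ℝ) 2
    norm_num at h2
    linarith
  have h21 : (2:ℝ) ^ ((1:ℝ)/3) ≤ 2 := by
    have h1 : (2:ℝ) ^ ((1:ℝ)/3) ≤ (2:ℝ) ^ (1:ℝ) :=
      Real.rpow_le_rpow_of_exponent_le one_le_two (by norm_num)
    rwa [Real.rpow_one] at h1
  have h2X43 : (2*X) ^ ((4:ℝ)/3) ≤ 4 * X ^ ((4:ℝ)/3) := by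
    rw [Real.mul_rpow (by norm_num) hX0.le]
    have := Real.rpow_nonneg hX0.le ((4:ℝ)/3)
    nlinarith
  have h2X13 : (2*X) ^ ((1:ℝ)/3) ≤ 2 * X ^ ((1:ℝ)/3) := by
    rw [Real.mul_rpow (by norm_num) hX0.le]
    have := Real.rpow_nonneg hX0.le ((1:ℝ)/3)
    nlinarith
  have hX413 : X ^ ((1:ℝ)/3) * X = X ^ ((4:ℝ)/3) := by
    nth_rewrite 2 [← Real.rpow_one X]
    rw [← Real.rpow_add hX0]; norm_num
  have hHb : ∀ y : ℝ, 0 ≤ y → y ≤ 2*X → |H y| ≤ 12 * X ^ ((4:ℝ)/3) / |c| := by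
    intro y hy0 hy2
    have e : |H y| = |3/c| * |y ^ ((4:ℝ)/3)| * |Real.sin (c * y ^ ((1:ℝ)/3))| := by
      rw [hH]; rw [abs_mul, abs_mul]
    rw [e, abs_of_nonneg (Real.rpow_nonneg hy0 _), abs_div]
    have hy43 : y ^ ((4:ℝ)/3) ≤ 4 * X ^ ((4:ℝ)/3) :=
      le_trans (Real.rpow_le_rpow hy0 hy2 (by norm_num)) h2X43
    have hs : |Real.sin (c * y ^ ((1:ℝ)/3))| ≤ 1 := Real.abs_sin_le_one _
    have h3c : |(3:ℝ)| / |c| = 3 / |c| := by norm_num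
    rw [h3c]
    have hc3 : (0:ℝ) ≤ 3 / |c| := by positivity
    calc 3 / |c| * y ^ ((4:ℝ)/3) * |Real.sin (c * y ^ ((1:ℝ)/3))|
        ≤ 3 / |c| * (4 * X ^ ((4:ℝ)/3)) * 1 := by
          apply mul_le_mul _ hs (abs_nonneg _) (by positivity)
          exact mul_le_mul_of_nonneg_left hy43 hc3
      _ = 12 * X ^ ((4:ℝ)/3) / |c| := by ring
  have hgb : |∫ x in X..(2*X), g x| ≤ 8 * X ^ ((4:ℝ)/3) / |c| := by
    have hb : ∀ x ∈ Set.uIoc X (2*X), ‖g x‖ ≤ 8 * X ^ ((1:ℝ)/3) / |c| := by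
      intro x hx
      rw [Set.uIoc_of_le (by linarith)] at hx
      have hx0 : 0 < x := lt_trans hX0 hx.1
      have e : |g x| = |4/c| * |x ^ ((1:ℝ)/3)| * |Real.sin (c * x ^ ((1:ℝ)/3))| := by
        rw [hg]; rw [abs_mul, abs_mul]
      rw [Real.norm_eq_abs, e, abs_of_nonneg (Real.rpow_nonneg hx0.le _), abs_div]
      have hx13 : x ^ ((1:ℝ)/3) ≤ 2 * X ^ ((1:ℝ)/3) :=
        le_trans (Real.rpow_le_rpow hx0.le hx.2 (by norm_num)) h2X13
      have hs : |Real.sin (c * x ^ ((1:ℝ)/3))| ≤ 1 := Real.abs_sin_le_one _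
      have h4c : |(4:ℝ)| / |c| = 4 / |c| := by norm_num
      rw [h4c]
      calc 4 / |c| * x ^ ((1:ℝ)/3) * |Real.sin (c * x ^ ((1:ℝ)/3))|
          ≤ 4 / |c| * (2 * X ^ ((1:ℝ)/3)) * 1 := by
            apply mul_le_mul _ hs (abs_nonneg _) (by positivity)
            exact mul_le_mul_of_nonneg_left hx13 (by positivity)
        _ = 8 * X ^ ((1:ℝ)/3) / |c| := by ring
    have := intervalIntegral.norm_integral_le_of_norm_le_const hb
    rw [Real.norm_eq_abs] at this
    have habs : |2*X - X| = X := by rw [abs_of_nonneg (by linarith)]; ring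
    rw [habs] at this
    calc |∫ x in X..(2*X), g x| ≤ 8 * X ^ ((1:ℝ)/3) / |c| * X := this
      _ = 8 * (X ^ ((1:ℝ)/3) * X) / |c| := by ring
      _ = 8 * X ^ ((4:ℝ)/3) / |c| := by rw [hX413]
  rw [hsplit]
  have t1 : |H (2*X) - H X - ∫ x in X..(2*X), g x| ≤
      |H (2*X) - H X| + |∫ x in X..(2*X), g x| := abs_sub _ _
  have t2 : |H (2*X) - H X| ≤ |H (2*X)| + |H X| := abs_sub _ _
  have b1 := hHb (2*X) (by linarith) (le_refl _)
  have b2 := hHb X hX0.le (by linarith)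
  have e : 12 * X ^ ((4:ℝ)/3) / |c| + 12 * X ^ ((4:ℝ)/3) / |c| + 8 * X ^ ((4:ℝ)/3) / |c|
      = 32 * X ^ ((4:ℝ)/3) / |c| := by ring
  linarith [t1, t2, b1, b2, hgb, e]

lemma cube_eq {d m : ℕ} (hd : 0 < d) (hm : 0 < m) :
    ((d:ℝ) ^ ((2:ℝ)/3) * (m:ℝ) ^ ((1:ℝ)/3)) ^ (3:ℕ) = (d:ℝ)^2 * (m:ℝ) := by
  have hd0 : (0:ℝ) ≤ d := Nat.cast_nonneg d
  have hm0 : (0:ℝ) ≤ m := Nat.cast_nonneg m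
  rw [mul_pow, ← Real.rpow_natCast ((d:ℝ) ^ ((2:ℝ)/3)) 3, ← Real.rpow_natCast ((m:ℝ) ^ ((1:ℝ)/3)) 3,
    ← Real.rpow_mul hd0, ← Real.rpow_mul hm0]
  norm_num

theorem stmt_16 :
    ∃ C : ℝ, 0 < C ∧
      ∀ (k d₁ d₂ m₁ m₂ : ℕ), 0 < k → 0 < d₁ → 0 < d₂ → 0 < m₁ → 0 < m₂ →
        d₁ ^ 2 * m₁ ≠ d₂ ^ 2 * m₂ →
        ∀ X : ℝ, 2 ≤ X →
          |∫ x in X..(2 * X), x ^ ((2 : ℝ) / 3) *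
              Real.cos (6 * Real.pi * (d₁ : ℝ) ^ ((2 : ℝ) / 3) * (m₁ : ℝ) ^ ((1 : ℝ) / 3) *
                x ^ ((1 : ℝ) / 3) / k) *
              Real.cos (6 * Real.pi * (d₂ : ℝ) ^ ((2 : ℝ) / 3) * (m₂ : ℝ) ^ ((1 : ℝ) / 3) *
                x ^ ((1 : ℝ) / 3) / k)| ≤
            C * k * X ^ ((4 : ℝ) / 3) /
              |(d₁ : ℝ) ^ ((2 : ℝ) / 3) * (m₁ : ℝ) ^ ((1 : ℝ) / 3) -
                (d₂ : ℝ) ^ ((2 : ℝ) / 3) * (m₂ : ℝ) ^ ((1 : ℝ) / 3)| := by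
  refine ⟨32, by norm_num, ?_⟩
  intro k d₁ d₂ m₁ m₂ hk hd₁ hd₂ hm₁ hm₂ hne X hX
  have hX0 : (0:ℝ) < X := by linarith
  set α := (d₁ : ℝ) ^ ((2:ℝ)/3) * (m₁ : ℝ) ^ ((1:ℝ)/3) with hαdef
  set β := (d₂ : ℝ) ^ ((2:ℝ)/3) * (m₂ : ℝ) ^ ((1:ℝ)/3) with hβdef
  have hα : 0 < α := by
    apply mul_pos <;> exact Real.rpow_pos_of_pos (by exact_mod_cast ‹_›) _
  have hβ : 0 < β := by
    apply mul_pos <;> exact Real.rpow_pos_of_pos (by exact_mod_cast ‹_›) _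
  have hαβ : α ≠ β := by
    intro h
    apply hne
    have := congrArg (· ^ (3:ℕ)) h
    simp only [hαdef, hβdef, cube_eq hd₁ hm₁, cube_eq hd₂ hm₂] at this
    exact_mod_cast this
  have hk0 : (0:ℝ) < k := by exact_mod_cast hk
  set p := 6 * Real.pi * α / k with hpdef
  set q := 6 * Real.pi * β / k with hqdef
  have hp : 0 < p := by
    apply div_pos _ hk0
    positivity
  have hq : 0 < q := by
    apply div_pos _ hk0
    positivity
  have hpq : p ≠ q := by
    intro h
    apply hαβ
    have h3 : 6 * Real.pi * α = 6 * Real.pi * β := by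
      have h2 := congrArg (fun t : ℝ => t * (k:ℝ)) h
      simp only [hpdef, hqdef] at h2
      rw [div_mul_cancel₀ _ hk0.ne', div_mul_cancel₀ _ hk0.ne'] at h2
      exact h2
    exact mul_left_cancel₀ (by positivity) h3
  -- pointwise identity
  have hpt : ∀ x : ℝ,
      x ^ ((2:ℝ)/3) * Real.cos (6 * Real.pi * (d₁ : ℝ) ^ ((2:ℝ)/3) * (m₁ : ℝ) ^ ((1:ℝ)/3) *
          x ^ ((1:ℝ)/3) / k) *
        Real.cos (6 * Real.pi * (d₂ : ℝ) ^ ((2:ℝ)/3) * (m₂ : ℝ) ^ ((1:ℝ)/3) * x ^ ((1:ℝ)/3) / k)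
      = (1/2) * (x ^ ((2:ℝ)/3) * Real.cos ((p + q) * x ^ ((1:ℝ)/3)))
        + (1/2) * (x ^ ((2:ℝ)/3) * Real.cos ((p - q) * x ^ ((1:ℝ)/3))) := by
    intro x
    have e1 : 6 * Real.pi * (d₁ : ℝ) ^ ((2:ℝ)/3) * (m₁ : ℝ) ^ ((1:ℝ)/3) * x ^ ((1:ℝ)/3) / k
        = p * x ^ ((1:ℝ)/3) := by rw [hpdef, hαdef]; ring
    have e2 : 6 * Real.pi * (d₂ : ℝ) ^ ((2:ℝ)/3) * (m₂ : ℝ) ^ ((1:ℝ)/3) * x ^ ((1:ℝ)/3) / k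
        = q * x ^ ((1:ℝ)/3) := by rw [hqdef, hβdef]; ring
    rw [e1, e2, add_mul, sub_mul, Real.cos_add, Real.cos_sub]
    ring
  rw [intervalIntegral.integral_congr (fun x _ => hpt x)]
  have hi1 : IntervalIntegrable (fun x : ℝ => (1/2) * (x ^ ((2:ℝ)/3) *
      Real.cos ((p + q) * x ^ ((1:ℝ)/3)))) MeasureTheory.volume X (2*X) :=
    (continuous_const.mul (contOsc (p+q))).intervalIntegrable _ _
  have hi2 : IntervalIntegrable (fun x : ℝ => (1/2) * (x ^ ((2:ℝ)/3) *
      Real.cos ((p - q) * x ^ ((1:ℝ)/3)))) MeasureTheory.volume X (2*X) :=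
    (continuous_const.mul (contOsc (p-q))).intervalIntegrable _ _
  rw [intervalIntegral.integral_add hi1 hi2, intervalIntegral.integral_const_mul,
    intervalIntegral.integral_const_mul]
  have hb1 := key_osc (p+q) X (by positivity) hX
  have hb2 := key_osc (p-q) X (sub_ne_zero.mpr hpq) hX
  have hle : |p - q| ≤ |p + q| := by
    rw [abs_of_pos (by linarith : 0 < p + q)]
    exact abs_le.mpr ⟨by linarith, by linarith⟩
  have hpq0 : 0 < |p - q| := abs_pos.mpr (sub_ne_zero.mpr hpq)
  have hmono : 32 * X ^ ((4:ℝ)/3) / |p + q| ≤ 32 * X ^ ((4:ℝ)/3) / |p - q| :=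
    div_le_div_of_nonneg_left (by positivity) hpq0 hle
  have habs_pq : |p - q| = 6 * Real.pi / k * |α - β| := by
    have : p - q = 6 * Real.pi / k * (α - β) := by rw [hpdef, hqdef]; ring
    rw [this, abs_mul, abs_of_pos (by positivity : (0:ℝ) < 6 * Real.pi / k)]
  have hαβ0 : 0 < |α - β| := abs_pos.mpr (sub_ne_zero.mpr hαβ)
  have key_bound : 32 * X ^ ((4:ℝ)/3) / |p - q| ≤ 16 * (k:ℝ) * X ^ ((4:ℝ)/3) / |α - β| := by
    rw [habs_pq]
    rw [div_le_div_iff₀ (by positivity) (by positivity)]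
    have hπ : (1:ℝ) ≤ Real.pi := by linarith [Real.pi_gt_three]
    have hX43 : (0:ℝ) < X ^ ((4:ℝ)/3) := Real.rpow_pos_of_pos hX0 _
    have hR : 16 * (k:ℝ) * X ^ ((4:ℝ)/3) * (6 * Real.pi / (k:ℝ) * |α - β|)
        = 96 * Real.pi * (X ^ ((4:ℝ)/3) * |α - β|) := by
      field_simp
      ring
    rw [hR]
    nlinarith [mul_pos hX43 hαβ0]
  calc |((1:ℝ)/2 * ∫ x in X..(2*X), x ^ ((2:ℝ)/3) * Real.cos ((p+q) * x ^ ((1:ℝ)/3)))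
        + 1/2 * ∫ x in X..(2*X), x ^ ((2:ℝ)/3) * Real.cos ((p-q) * x ^ ((1:ℝ)/3))|
      ≤ 1/2 * |∫ x in X..(2*X), x ^ ((2:ℝ)/3) * Real.cos ((p+q) * x ^ ((1:ℝ)/3))|
        + 1/2 * |∫ x in X..(2*X), x ^ ((2:ℝ)/3) * Real.cos ((p-q) * x ^ ((1:ℝ)/3))| := by
        refine le_trans (abs_add_le _ _) ?_
        rw [abs_mul, abs_mul, show |(1:ℝ)/2| = 1/2 from by rw [abs_of_nonneg]; norm_num]
    _ ≤ 1/2 * (32 * X ^ ((4:ℝ)/3) / |p + q|) + 1/2 * (32 * X ^ ((4:ℝ)/3) / |p - q|) := by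
        gcongr
    _ ≤ 32 * X ^ ((4:ℝ)/3) / |p - q| := by linarith
    _ ≤ 16 * (k:ℝ) * X ^ ((4:ℝ)/3) / |α - β| := key_bound
    _ ≤ 32 * (k:ℝ) * X ^ ((4:ℝ)/3) / |α - β| := by
        have e : 32 * (k:ℝ) * X ^ ((4:ℝ)/3) / |α - β|
            = 16 * (k:ℝ) * X ^ ((4:ℝ)/3) / |α - β| + 16 * (k:ℝ) * X ^ ((4:ℝ)/3) / |α - β| := by
          ring
        have hnn : (0:ℝ) ≤ 16 * (k:ℝ) * X ^ ((4:ℝ)/3) / |α - β| := by positivity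
        rw [e]
        linarith
end

section
/- Let d, k be positive integers with d | k, N ≥ 2 and let N_k be an integer with N ≤ N_k ≤ 2N such that ‖(N_k+1/2)/d²‖ ≥ c/(d(1+log² k)). Then ∑_{m : d² m ≤ N_k} 1/(N_k + 1/2 - d² m) ≤ C d^{-1} (1 + log² k)(1 + log N) for a constant C depending only on c. -/
set_option maxHeartbeats 800000


open Real

lemma sum_inv_le_one_add_log (n : ℕ) :
    ∑ j ∈ Finset.Icc 1 n, (1 : ℝ) / j ≤ 1 + Real.log n := by
  have h := harmonic_le_one_add_log n
  have heq : ((harmonic n : ℚ) : ℝ) = ∑ j ∈ Finset.Icc 1 n, (1 : ℝ) / j := by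
    rw [harmonic_eq_sum_Icc]
    push_cast
    simp [one_div]
  linarith [h]

theorem stmt_17 (c : ℝ) (hc : 0 < c) :
    ∃ C : ℝ, 0 < C ∧
      ∀ (d k : ℕ) (N : ℝ) (Nk : ℤ), 0 < d → d ∣ k → 2 ≤ N →
        N ≤ (Nk : ℝ) → (Nk : ℝ) ≤ 2 * N →
        c / (d * (1 + (Real.log k) ^ 2)) ≤
          |((Nk : ℝ) + 1 / 2) / (d : ℝ) ^ 2 -
            round (((Nk : ℝ) + 1 / 2) / (d : ℝ) ^ 2)| →
        ∑ m ∈ Finset.Icc 1 (Nk.toNat / d ^ 2),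
            1 / ((Nk : ℝ) + 1 / 2 - (d : ℝ) ^ 2 * (m : ℝ)) ≤
          C * (d : ℝ)⁻¹ * (1 + (Real.log k) ^ 2) * (1 + Real.log N) := by
  refine ⟨1 / c + 2, by positivity, ?_⟩
  intro d k N Nk hd hdk hN hNle hNk2 hdist
  set A := (Real.log k) ^ 2 with hA
  have hA0 : (0 : ℝ) ≤ A := sq_nonneg _
  have hd1 : (1 : ℝ) ≤ (d : ℝ) := by exact_mod_cast hd
  have hD : (0 : ℝ) < (d : ℝ) ^ 2 := by positivity
  have hlogN : 0 ≤ Real.log N := Real.log_nonneg (by linarith)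
  set M := Nk.toNat / d ^ 2 with hM
  have hMd : M * d ^ 2 ≤ Nk.toNat := Nat.div_mul_le_self Nk.toNat (d ^ 2)
  clear_value M
  have hNkpos : (0 : ℝ) < (Nk : ℝ) := by linarith
  have hNkto : ((Nk.toNat : ℕ) : ℝ) = (Nk : ℝ) := by
    have : (0 : ℤ) ≤ Nk := by exact_mod_cast hNkpos.le
    rw [← Int.cast_natCast, Int.toNat_of_nonneg this]
  have hMle : ((d : ℝ) ^ 2) * M ≤ (Nk : ℝ) := by
    have h1 := hMd
    calc ((d : ℝ) ^ 2) * M = ((M * d ^ 2 : ℕ) : ℝ) := by push_cast; ring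
      _ ≤ ((Nk.toNat : ℕ) : ℝ) := by exact_mod_cast h1
      _ = (Nk : ℝ) := hNkto
  set x := ((Nk : ℝ) + 1 / 2) / (d : ℝ) ^ 2 with hx
  set eps := c / (d * (1 + A)) with heps
  have heps0 : 0 < eps := by positivity
  -- positivity and key lower bound for each term
  have hpos : ∀ m : ℕ, m ≤ M → 0 < (Nk : ℝ) + 1 / 2 - (d : ℝ) ^ 2 * m := by
    intro m hm
    have hmr : (m : ℝ) ≤ (M : ℝ) := by exact_mod_cast hm
    nlinarith
  have hkey : ∀ m : ℕ, m ≤ M →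
      (d : ℝ) ^ 2 * eps ≤ (Nk : ℝ) + 1 / 2 - (d : ℝ) ^ 2 * m := by
    intro m hm
    have hnum := hpos m hm
    have hxm : x - (m : ℝ) = ((Nk : ℝ) + 1 / 2 - (d : ℝ) ^ 2 * m) / (d : ℝ) ^ 2 := by
      rw [hx]; field_simp
    have hxmpos : 0 < x - (m : ℝ) := by
      rw [hxm]; positivity
    have h2 : eps ≤ x - (m : ℝ) := by
      have hr := round_le x (m : ℤ)
      have : |x - ((m : ℤ) : ℝ)| = x - (m : ℝ) := by
        rw [abs_of_pos]
        · push_cast; ring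
        · push_cast; exact hxmpos
      calc eps ≤ |x - round x| := hdist
        _ ≤ |x - ((m : ℤ) : ℝ)| := hr
        _ = x - (m : ℝ) := this
    have := mul_le_mul_of_nonneg_left h2 hD.le
    rw [hxm, mul_div_cancel₀ _ (ne_of_gt hD)] at this
    linarith
  -- case M = 0
  rcases Nat.eq_zero_or_pos M with hM0 | hMpos
  · rw [hM0]
    simp only [Finset.Icc_eq_empty_of_lt (by norm_num : (1:ℕ) > 0), Finset.sum_empty]
    have : (0:ℝ) ≤ (1 / c + 2) * (d : ℝ)⁻¹ * (1 + A) * (1 + Real.log N) := by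
      have h1 : (0:ℝ) ≤ 1 / c + 2 := by positivity
      have h2 : (0:ℝ) ≤ (d:ℝ)⁻¹ := by positivity
      have h3 : (0:ℝ) ≤ 1 + A := by linarith
      have h4 : (0:ℝ) ≤ 1 + Real.log N := by linarith
      positivity
    linarith
  obtain ⟨n, rfl⟩ : ∃ n, M = n + 1 := ⟨M - 1, (Nat.succ_pred_eq_of_pos hMpos).symm⟩
  rw [Finset.sum_Icc_succ_top (by omega)]
  -- head term bound
  have hhead : 1 / ((Nk : ℝ) + 1 / 2 - (d : ℝ) ^ 2 * ((n + 1 : ℕ) : ℝ)) ≤ (1 + A) / ((d : ℝ) * c) := by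
    have h1 := hkey (n + 1) le_rfl
    have h2 : (0:ℝ) < (d : ℝ) ^ 2 * eps := by positivity
    have h3 := one_div_le_one_div_of_le h2 h1
    have h4 : (d : ℝ) ^ 2 * eps = (d : ℝ) * c / (1 + A) := by
      rw [heps]; field_simp
    rw [h4] at h3
    calc 1 / ((Nk : ℝ) + 1 / 2 - (d : ℝ) ^ 2 * ((n + 1 : ℕ) : ℝ)) ≤ 1 / ((d : ℝ) * c / (1 + A)) := h3
      _ = (1 + A) / ((d : ℝ) * c) := by field_simp
  -- tail bound
  have htail : ∑ m ∈ Finset.Icc 1 n, 1 / ((Nk : ℝ) + 1 / 2 - (d : ℝ) ^ 2 * (m : ℝ)) ≤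
      ((d : ℝ) ^ 2)⁻¹ * (1 + Real.log n) := by
    have step1 : ∑ m ∈ Finset.Icc 1 n, 1 / ((Nk : ℝ) + 1 / 2 - (d : ℝ) ^ 2 * (m : ℝ)) ≤
        ∑ m ∈ Finset.Icc 1 n, 1 / ((d : ℝ) ^ 2 * ((n + 1 - m : ℕ) : ℝ)) := by
      apply Finset.sum_le_sum
      intro m hm
      simp only [Finset.mem_Icc] at hm
      have hm1 : 1 ≤ m := hm.1
      have hmn : m ≤ n := hm.2
      have hM1 := hpos (n + 1) le_rfl
      have hcast : ((n + 1 - m : ℕ) : ℝ) = ((n + 1 : ℕ) : ℝ) - (m : ℝ) := by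
        have : m ≤ n + 1 := by omega
        push_cast [Nat.cast_sub this]
        ring
      have hden : (d : ℝ) ^ 2 * ((n + 1 - m : ℕ) : ℝ) ≤ (Nk : ℝ) + 1 / 2 - (d : ℝ) ^ 2 * (m : ℝ) := by
        rw [hcast]
        have : (d:ℝ)^2 * (((n + 1 : ℕ) : ℝ) - (m:ℝ)) = ((Nk : ℝ) + 1 / 2 - (d : ℝ) ^ 2 * (m : ℝ)) - ((Nk : ℝ) + 1 / 2 - (d : ℝ) ^ 2 * ((n + 1 : ℕ) : ℝ)) := by ring
        rw [this]
        linarith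
      have hdpos : (0:ℝ) < (d : ℝ) ^ 2 * ((n + 1 - m : ℕ) : ℝ) := by
        have : (1:ℕ) ≤ n + 1 - m := by omega
        have : (1:ℝ) ≤ ((n + 1 - m : ℕ) : ℝ) := by exact_mod_cast this
        nlinarith
      exact one_div_le_one_div_of_le hdpos hden
    have step2 : ∑ m ∈ Finset.Icc 1 n, 1 / ((d : ℝ) ^ 2 * ((n + 1 - m : ℕ) : ℝ)) =
        ∑ j ∈ Finset.Icc 1 n, 1 / ((d : ℝ) ^ 2 * (j : ℝ)) := by
      apply Finset.sum_nbij' (fun m => n + 1 - m) (fun j => n + 1 - j)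
      · intro a ha; simp only [Finset.mem_Icc] at *; omega
      · intro a ha; simp only [Finset.mem_Icc] at *; omega
      · intro a ha; simp only [Finset.mem_Icc] at *; omega
      · intro a ha; simp only [Finset.mem_Icc] at *; omega
      · intro a ha; rfl
    have step3 : ∑ j ∈ Finset.Icc 1 n, 1 / ((d : ℝ) ^ 2 * (j : ℝ)) =
        ((d : ℝ) ^ 2)⁻¹ * ∑ j ∈ Finset.Icc 1 n, (1:ℝ) / j := by
      rw [Finset.mul_sum]
      apply Finset.sum_congr rfl
      intro j hj
      rw [one_div, mul_inv, ← one_div, mul_one_div, one_div, div_eq_mul_inv]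
    calc ∑ m ∈ Finset.Icc 1 n, 1 / ((Nk : ℝ) + 1 / 2 - (d : ℝ) ^ 2 * (m : ℝ))
        ≤ ∑ m ∈ Finset.Icc 1 n, 1 / ((d : ℝ) ^ 2 * ((n + 1 - m : ℕ) : ℝ)) := step1
      _ = ((d : ℝ) ^ 2)⁻¹ * ∑ j ∈ Finset.Icc 1 n, (1:ℝ) / j := by rw [step2, step3]
      _ ≤ ((d : ℝ) ^ 2)⁻¹ * (1 + Real.log n) := by
          apply mul_le_mul_of_nonneg_left (sum_inv_le_one_add_log n)
          positivity
  -- log n ≤ log (2 N)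
  have hlog2N : Real.log n ≤ Real.log 2 + Real.log N := by
    have h2N : Real.log (2 * N) = Real.log 2 + Real.log N :=
      Real.log_mul (by norm_num) (by linarith)
    rw [← h2N]
    rcases Nat.eq_zero_or_pos n with h0 | h1
    · rw [h0]; simp
      exact Real.log_nonneg (by linarith)
    · apply Real.log_le_log (by exact_mod_cast h1)
      have hn1 : ((n:ℝ)) ≤ (Nk:ℝ) := by
        have : (n + 1) * d ^ 2 ≤ Nk.toNat := hMd
        have hle : (n:ℕ) ≤ Nk.toNat := by
          have h2 : n + 1 ≤ (n + 1) * d ^ 2 := Nat.le_mul_of_pos_right _ (by positivity)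
          omega
        calc (n:ℝ) ≤ ((Nk.toNat : ℕ):ℝ) := by exact_mod_cast hle
          _ = (Nk:ℝ) := hNkto
      linarith
  -- final arithmetic
  have hlog2 : Real.log 2 ≤ 1 := by
    have := Real.log_two_lt_d9
    linarith
  have hdinv : (d:ℝ)⁻¹ ≤ 1 := by
    rw [inv_le_one_iff₀]; right; exact hd1
  have hdinv2 : ((d:ℝ)^2)⁻¹ ≤ (d:ℝ)⁻¹ := by
    rw [sq, mul_inv]
    nlinarith [inv_pos.mpr (lt_of_lt_of_le one_pos hd1)]
  have hdinv0 : (0:ℝ) < (d:ℝ)⁻¹ := by positivity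
  have hheadbd : (1 + A) / ((d : ℝ) * c) ≤ (1/c) * (d:ℝ)⁻¹ * (1 + A) * (1 + Real.log N) := by
    have he : (1 + A) / ((d : ℝ) * c) = (1/c) * (d:ℝ)⁻¹ * (1 + A) := by
      rw [div_eq_mul_inv, mul_inv]; ring
    rw [he]
    have hx0 : (0:ℝ) ≤ (1/c) * (d:ℝ)⁻¹ * (1 + A) := by positivity
    nlinarith [mul_nonneg hx0 hlogN]
  have htailbd : ((d : ℝ) ^ 2)⁻¹ * (1 + Real.log n) ≤ 2 * (d:ℝ)⁻¹ * (1 + A) * (1 + Real.log N) := by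
    have h1 : 1 + Real.log n ≤ 2 * (1 + Real.log N) := by linarith
    have h2 : ((d : ℝ) ^ 2)⁻¹ * (1 + Real.log n) ≤ (d:ℝ)⁻¹ * (2 * (1 + Real.log N)) := by
      have hn0 : (0:ℝ) ≤ 1 + Real.log n := by
        rcases Nat.eq_zero_or_pos n with h0 | h1'
        · rw [h0]; simp
        · have : (1:ℝ) ≤ (n:ℝ) := by exact_mod_cast h1'
          have := Real.log_nonneg this
          linarith
      calc ((d : ℝ) ^ 2)⁻¹ * (1 + Real.log n) ≤ (d:ℝ)⁻¹ * (1 + Real.log n) := by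
            apply mul_le_mul_of_nonneg_right hdinv2 hn0
        _ ≤ (d:ℝ)⁻¹ * (2 * (1 + Real.log N)) := by
            apply mul_le_mul_of_nonneg_left h1 hdinv0.le
    calc ((d : ℝ) ^ 2)⁻¹ * (1 + Real.log n) ≤ (d:ℝ)⁻¹ * (2 * (1 + Real.log N)) := h2
      _ = 2 * (d:ℝ)⁻¹ * 1 * (1 + Real.log N) := by ring
      _ ≤ 2 * (d:ℝ)⁻¹ * (1 + A) * (1 + Real.log N) := by
          gcongr
          linarith
  have hgoal : (1/c) * (d:ℝ)⁻¹ * (1 + A) * (1 + Real.log N) + 2 * (d:ℝ)⁻¹ * (1 + A) * (1 + Real.log N)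
      = (1 / c + 2) * (d : ℝ)⁻¹ * (1 + A) * (1 + Real.log N) := by ring
  linarith [htail, hhead, hheadbd, htailbd]
end
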